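/- arXiv:2602.10286 — 7 statements merged into one kernel-verified Lean document; each statement's English description precedes it below -/
import Mathlib

section
/- If P satisfies positive–negative conditional independence with strictly positive conditionals p_+(y|x) > 0 and p_−(y|x) > 0 for all x, y, then the CPRD ω_P is representable by a Bradley–Terry model, and the score function r(x,y) = log(p_+(y|x)/p_−(y|x)) realizes it: for all x with P_X(x) > 0 and all y ≠ y', ω_P(y ≻ y' | x) = σ(r(x,y) − r(x,y')). -/
open scoped BigOperators

/-- The sigmoid function σ(t) = 1/(1+e^{-t}). -/
noncomputable def sigmoid (t : ℝ) : ℝ := 1 / (1 + Real.exp (-t))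

lemma sigmoid_log_div (a b : ℝ) (ha : 0 < a) (hb : 0 < b) :
    a / (a + b) = sigmoid (Real.log a - Real.log b) := by
  unfold sigmoid
  rw [← Real.log_div ha.ne' hb.ne', ← Real.log_inv, Real.exp_log (by positivity)]
  rw [inv_div]
  field_simp

/-- If P satisfies positive–negative conditional independence with strictly positive
conditionals, then the CPRD ω_P is representable by a Bradley–Terry model, and the score
function r(x,y) = log(p₊(y|x)/p₋(y|x)) realizes it. -/
theorem stmt_2 {X Y : Type*} [Fintype X] [Fintype Y] [Nonempty X] [Nonempty Y]
    (P : X → Y → Y → ℝ) (PX : X → ℝ) (pplus pminus : X → Y → ℝ)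
    (hPX0 : ∀ x, 0 ≤ PX x) (hPX1 : ∑ x, PX x = 1)
    (hp0 : ∀ x y, 0 < pplus x y) (hm0 : ∀ x y, 0 < pminus x y)
    (hp1 : ∀ x, ∑ y, pplus x y = 1) (hm1 : ∀ x, ∑ y, pminus x y = 1)
    (hfact : ∀ x yp ym, P x yp ym = PX x * pplus x yp * pminus x ym) :
    (∃ r : X → Y → ℝ, ∀ x : X, ∀ y y' : Y, y ≠ y' → 0 < P x y y' + P x y' y →
        P x y y' / (P x y y' + P x y' y) = sigmoid (r x y - r x y')) ∧
    (∀ x : X, 0 < PX x → ∀ y y' : Y, y ≠ y' →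
        P x y y' / (P x y y' + P x y' y) =
          sigmoid (Real.log (pplus x y / pminus x y) - Real.log (pplus x y' / pminus x y'))) := by
  have key : ∀ x : X, 0 < PX x → ∀ y y' : Y,
      P x y y' / (P x y y' + P x y' y) =
        sigmoid (Real.log (pplus x y / pminus x y) - Real.log (pplus x y' / pminus x y')) := by
    intro x hx y y'
    have ha : 0 < pplus x y * pminus x y' := mul_pos (hp0 x y) (hm0 x y')
    have hb : 0 < pplus x y' * pminus x y := mul_pos (hp0 x y') (hm0 x y)
    have h1 : P x y y' / (P x y y' + P x y' y)
        = (pplus x y * pminus x y') / (pplus x y * pminus x y' + pplus x y' * pminus x y) := by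
      rw [hfact, hfact]
      rw [mul_assoc, mul_assoc, ← mul_add, mul_div_mul_left _ _ hx.ne']
    rw [h1, sigmoid_log_div _ _ ha hb,
      Real.log_mul (hp0 x y).ne' (hm0 x y').ne', Real.log_mul (hp0 x y').ne' (hm0 x y).ne',
      Real.log_div (hp0 x y).ne' (hm0 x y).ne', Real.log_div (hp0 x y').ne' (hm0 x y').ne']
    ring_nf
  constructor
  · refine ⟨fun x y => Real.log (pplus x y / pminus x y), fun x y y' hne hpos => ?_⟩
    have hx : 0 < PX x := by
      by_contra h
      have hx0 : PX x = 0 := le_antisymm (not_lt.mp h) (hPX0 x)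
      rw [hfact, hfact, hx0] at hpos
      simp at hpos
    exact key x hx y y'
  · intro x hx y y' _
    exact key x hx y y'
end

section
/- If the CPRD ω_P is representable by a Bradley–Terry model, then there exists a distribution Q on 𝒳 × 𝒴 × 𝒴 satisfying positive–negative conditional independence with strictly positive conditionals such that for all x ∈ 𝒳 and all y ≠ y' with P(x,y,y') + P(x,y',y) > 0, one has ω_Q(y ≻ y' | x) = ω_P(y ≻ y' | x). -/
open scoped BigOperators

/-- If the CPRD ω_P is representable by a Bradley–Terry model, then there exists a distribution
Q on 𝒳 × 𝒴 × 𝒴 satisfying positive–negative conditional independence with strictly positive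
conditionals whose CPRD agrees with that of P on the support of the comparison distribution. -/
theorem stmt_3 {X Y : Type*} [Fintype X] [Fintype Y] [Nonempty X] [Nonempty Y]
    (P : X → Y → Y → ℝ)
    (hP0 : ∀ x y y', 0 ≤ P x y y')
    (hP1 : ∑ x, ∑ y, ∑ y', P x y y' = 1)
    (hrep : ∃ r : X → Y → ℝ, ∀ x : X, ∀ y y' : Y, y ≠ y' → 0 < P x y y' + P x y' y →
        P x y y' / (P x y y' + P x y' y) = sigmoid (r x y - r x y')) :
    ∃ (Q : X → Y → Y → ℝ) (QX : X → ℝ) (qplus qminus : X → Y → ℝ),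
      (∀ x y y', 0 ≤ Q x y y') ∧ (∑ x, ∑ y, ∑ y', Q x y y' = 1) ∧
      (∀ x, 0 ≤ QX x) ∧ (∑ x, QX x = 1) ∧
      (∀ x y, 0 < qplus x y) ∧ (∀ x y, 0 < qminus x y) ∧
      (∀ x, ∑ y, qplus x y = 1) ∧ (∀ x, ∑ y, qminus x y = 1) ∧
      (∀ x yp ym, Q x yp ym = QX x * qplus x yp * qminus x ym) ∧
      (∀ x : X, ∀ y y' : Y, y ≠ y' → 0 < P x y y' + P x y' y →
        Q x y y' / (Q x y y' + Q x y' y) = P x y y' / (P x y y' + P x y' y)) := by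
  obtain ⟨r, hr⟩ := hrep
  have hnpos : (0:ℝ) < (Fintype.card X : ℝ) := by
    exact_mod_cast Fintype.card_pos
  set Zp : X → ℝ := fun x => ∑ y, Real.exp (r x y / 2) with hZp
  set Zm : X → ℝ := fun x => ∑ y, Real.exp (-(r x y) / 2) with hZm
  have hZppos : ∀ x, 0 < Zp x := fun x =>
    Finset.sum_pos (fun y _ => Real.exp_pos _) Finset.univ_nonempty
  have hZmpos : ∀ x, 0 < Zm x := fun x =>
    Finset.sum_pos (fun y _ => Real.exp_pos _) Finset.univ_nonempty
  set QX : X → ℝ := fun _ => 1 / (Fintype.card X : ℝ) with hQX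
  set qplus : X → Y → ℝ := fun x y => Real.exp (r x y / 2) / Zp x with hqp
  set qminus : X → Y → ℝ := fun x y => Real.exp (-(r x y) / 2) / Zm x with hqm
  set Q : X → Y → Y → ℝ := fun x yp ym => QX x * qplus x yp * qminus x ym with hQ
  have hQXpos : ∀ x, 0 < QX x := fun x => by positivity
  have hqppos : ∀ x y, 0 < qplus x y := fun x y => div_pos (Real.exp_pos _) (hZppos x)
  have hqmpos : ∀ x y, 0 < qminus x y := fun x y => div_pos (Real.exp_pos _) (hZmpos x)
  have hqpsum : ∀ x, ∑ y, qplus x y = 1 := fun x => by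
    simp only [hqp]
    rw [← Finset.sum_div, div_self (hZppos x).ne']
  have hqmsum : ∀ x, ∑ y, qminus x y = 1 := fun x => by
    simp only [hqm]
    rw [← Finset.sum_div, div_self (hZmpos x).ne']
  have hQXsum : ∑ x, QX x = 1 := by
    simp only [hQX, Finset.sum_const, nsmul_eq_mul, mul_one_div]
    exact div_self hnpos.ne'
  refine ⟨Q, QX, qplus, qminus, ?_, ?_, ?_, hQXsum, hqppos, hqmpos, hqpsum, hqmsum, fun _ _ _ => rfl, ?_⟩
  · intro x y y'
    exact le_of_lt (by positivity)
  · simp only [hQ]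
    have hx : ∀ x : X, ∑ y, ∑ y', QX x * qplus x y * qminus x y' = QX x := by
      intro x
      simp_rw [← Finset.mul_sum, hqmsum x, mul_one, ← Finset.mul_sum, hqpsum x, mul_one]
    rw [Finset.sum_congr rfl fun x _ => hx x, hQXsum]
  · exact fun x => le_of_lt (hQXpos x)
  · intro x y y' hne hpos
    rw [hr x y y' hne hpos]
    have hc : 0 < QX x / (Zp x * Zm x) := by positivity
    have hQe : ∀ a b : Y, Q x a b = (QX x / (Zp x * Zm x)) *
        Real.exp ((r x a - r x b) / 2) := by
      intro a b
      simp only [hQ, hqp, hqm]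
      have h2 : (r x a - r x b) / 2 = r x a / 2 + (-(r x b)) / 2 := by ring
      rw [h2, Real.exp_add]
      field_simp
    rw [hQe y y', hQe y' y, ← mul_add, mul_div_mul_left _ _ hc.ne']
    set t := r x y - r x y' with ht
    have h1 : r x y' - r x y = -t := by ring
    rw [h1, sigmoid]
    rw [div_eq_div_iff (by positivity) (by positivity)]
    rw [one_mul, mul_add, mul_one, ← Real.exp_add]
    have h3 : t / 2 + -t = -t / 2 := by ring
    rw [h3]
end

section
/- There exists a constant C ∈ ℝ depending only on P (not on r) such that for every score function r : 𝒳 × 𝒴 → ℝ, the population BT objective decomposes as L_BT(r) = C + Z · Σ over all (x, {y,y'}) with P̃(x,{y,y'}) > 0 of P̃(x,{y,y'}) · d(ω_P(y ≻ y' | x), σ(r(x,y) − r(x,y'))), where d(p,q) is the KL divergence between Bernoulli(p) and Bernoulli(q). -/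
open scoped BigOperators

/-- The population Bradley–Terry objective. -/
noncomputable def LBT {X Y : Type*} [Fintype X] [Fintype Y]
    (P : X → Y → Y → ℝ) (r : X → Y → ℝ) : ℝ :=
  -∑ x, ∑ y, ∑ y', P x y y' * Real.log (sigmoid (r x y - r x y'))

/-- KL divergence between Bernoulli(p) and Bernoulli(q):
d(p,q) = p log(p/q) + (1−p) log((1−p)/(1−q)), with the convention 0 · log 0 = 0
(in Lean, `Real.log 0 = 0`, so this convention is automatic). -/
noncomputable def klBern (p q : ℝ) : ℝ :=
  p * Real.log (p / q) + (1 - p) * Real.log ((1 - p) / (1 - q))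

/-- There is a constant C depending only on P such that the population BT objective
decomposes as L_BT(r) = C + Z · Σ_{(x,{y,y'})} P̃(x,{y,y'}) · d(ω_P(y ≻ y'|x), σ(r(x,y)−r(x,y'))).
Here Z · P̃(x,{y,y'}) = P(x,y,y') + P(x,y',y), and the sum over unordered pairs {y,y'} of
distinct responses is written as one half of the sum over ordered pairs with y ≠ y'
(the summand being symmetric in (y,y')); terms with P̃(x,{y,y'}) = 0 vanish. -/
theorem stmt_5 {X Y : Type*} [Fintype X] [Fintype Y] [DecidableEq Y]
    [Nonempty X] [Nonempty Y]
    (P : X → Y → Y → ℝ)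
    (hP0 : ∀ x y y', 0 ≤ P x y y')
    (hP1 : ∑ x, ∑ y, ∑ y', P x y y' = 1) :
    ∃ C : ℝ, ∀ r : X → Y → ℝ,
      LBT P r = C + (1 / 2) * ∑ x, ∑ y, ∑ y',
        if y ≠ y' then
          (P x y y' + P x y' y) *
            klBern (P x y y' / (P x y y' + P x y' y)) (sigmoid (r x y - r x y'))
        else 0 := by
  classical
  have hσpos : ∀ t : ℝ, 0 < sigmoid t := by
    intro t; unfold sigmoid; positivity
  have hone : ∀ t : ℝ, 1 - sigmoid t = sigmoid (-t) := by
    intro t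
    unfold sigmoid
    rw [neg_neg]
    have h3 : Real.exp (-t) * Real.exp t = 1 := by rw [← Real.exp_add]; simp
    have h1 : (0:ℝ) < 1 + Real.exp (-t) := by positivity
    have h2 : (0:ℝ) < 1 + Real.exp t := by positivity
    field_simp
    nlinarith [h3]
  have key : ∀ a b t : ℝ, 0 ≤ a → 0 ≤ b →
      (a + b) * klBern (a / (a + b)) (sigmoid t)
        = (a * Real.log (a / (a + b)) + b * Real.log (b / (a + b)))
          - (a * Real.log (sigmoid t) + b * Real.log (sigmoid (-t))) := by
    intro a b t ha hb
    rcases eq_or_lt_of_le (add_nonneg ha hb) with hs | hs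
    · have ha0 : a = 0 := by linarith
      have hb0 : b = 0 := by linarith
      simp [klBern, ha0, hb0]
    · have hs' : a + b ≠ 0 := ne_of_gt hs
      have h1p : 1 - a / (a + b) = b / (a + b) := by field_simp; ring
      rw [klBern, h1p, hone t]
      have hlog : ∀ c : ℝ, 0 ≤ c → ∀ u : ℝ, 0 < u →
          (a + b) * (c / (a + b) * Real.log (c / (a + b) / u))
          = c * Real.log (c / (a + b)) - c * Real.log u := by
        intro c hc u hu
        rcases eq_or_lt_of_le hc with hc0 | hc0
        · simp [← hc0]
        · have hc' : c / (a + b) ≠ 0 := by positivity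
          rw [Real.log_div hc' (ne_of_gt hu)]
          field_simp
      rw [mul_add, hlog a ha _ (hσpos t), hlog b hb _ (hσpos (-t))]
      ring
  -- A : the r-independent "entropy" part
  set A : X → Y → Y → ℝ := fun x y y' =>
    if y ≠ y' then P x y y' * Real.log (P x y y' / (P x y y' + P x y' y)) else 0 with hA
  refine ⟨(∑ x, ∑ y, P x y y * Real.log 2) - ∑ x, ∑ y, ∑ y', A x y y', fun r => ?_⟩
  set B : X → Y → Y → ℝ := fun x y y' =>
    if y ≠ y' then P x y y' * Real.log (sigmoid (r x y - r x y')) else 0 with hB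
  -- Step 1: the big sum equals 2 * (∑ A - ∑ B)
  have hF : (∑ x, ∑ y, ∑ y',
      if y ≠ y' then
        (P x y y' + P x y' y) *
          klBern (P x y y' / (P x y y' + P x y' y)) (sigmoid (r x y - r x y'))
      else 0)
      = 2 * ((∑ x, ∑ y, ∑ y', A x y y') - (∑ x, ∑ y, ∑ y', B x y y')) := by
    have hpoint : ∀ x y y',
        (if y ≠ y' then
          (P x y y' + P x y' y) *
            klBern (P x y y' / (P x y y' + P x y' y)) (sigmoid (r x y - r x y'))
        else 0)
        = (A x y y' + A x y' y) - (B x y y' + B x y' y) := by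
      intro x y y'
      by_cases h : y = y'
      · simp [hA, hB, h]
      · have h' : y' ≠ y := fun hh => h hh.symm
        simp only [hA, hB, if_pos h, if_pos h', ne_eq, h, not_false_iff, if_true,
          h', if_true]
        rw [key (P x y y') (P x y' y) (r x y - r x y') (hP0 x y y') (hP0 x y' y)]
        rw [neg_sub]
        rw [add_comm (P x y' y) (P x y y')]
      -- note: after this there may be leftover goals; handle below
    calc (∑ x, ∑ y, ∑ y', if y ≠ y' then
            (P x y y' + P x y' y) *
              klBern (P x y y' / (P x y y' + P x y' y)) (sigmoid (r x y - r x y'))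
          else 0)
        = ∑ x, ∑ y, ∑ y', ((A x y y' + A x y' y) - (B x y y' + B x y' y)) := by
          refine Finset.sum_congr rfl fun x _ => Finset.sum_congr rfl fun y _ =>
            Finset.sum_congr rfl fun y' _ => hpoint x y y'
      _ = ∑ x, (((∑ y, ∑ y', A x y y') + (∑ y, ∑ y', A x y' y))
            - ((∑ y, ∑ y', B x y y') + (∑ y, ∑ y', B x y' y))) := by
          simp [Finset.sum_add_distrib, Finset.sum_sub_distrib]
      _ = ∑ x, (2 * (∑ y, ∑ y', A x y y') - 2 * (∑ y, ∑ y', B x y y')) := by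
          refine Finset.sum_congr rfl fun x _ => ?_
          rw [Finset.sum_comm (f := fun y y' => A x y' y),
              Finset.sum_comm (f := fun y y' => B x y' y)]
          ring
      _ = 2 * ((∑ x, ∑ y, ∑ y', A x y y') - (∑ x, ∑ y, ∑ y', B x y y')) := by
          rw [← Finset.sum_sub_distrib, Finset.mul_sum]
          refine Finset.sum_congr rfl fun x _ => ?_
          ring
  rw [hF]
  -- Step 2: LBT = diag part - ∑ B
  have hLBT : LBT P r = (∑ x, ∑ y, P x y y * Real.log 2) - ∑ x, ∑ y, ∑ y', B x y y' := by
    have hσ0 : Real.log (sigmoid 0) = -Real.log 2 := by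
      have : sigmoid 0 = 1/2 := by unfold sigmoid; norm_num
      rw [this, one_div, Real.log_inv]
    have hdiag : ∀ x, ∑ y, P x y y * Real.log 2
        = ∑ y, ∑ y', (if y = y' then P x y y' * Real.log 2 else 0) := by
      intro x
      refine Finset.sum_congr rfl fun y _ => ?_
      rw [Finset.sum_ite_eq]
      simp
    rw [LBT]
    simp only [hdiag]
    rw [← Finset.sum_sub_distrib, ← Finset.sum_neg_distrib]
    refine Finset.sum_congr rfl fun x _ => ?_
    rw [← Finset.sum_sub_distrib, ← Finset.sum_neg_distrib]
    refine Finset.sum_congr rfl fun y _ => ?_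
    rw [← Finset.sum_sub_distrib, ← Finset.sum_neg_distrib]
    refine Finset.sum_congr rfl fun y' _ => ?_
    by_cases h : y = y'
    · subst h
      simp [hB, sub_self, hσ0]
    · simp [hB, h]
  rw [hLBT]
  ring
end

section
/- Assume P satisfies positive–negative conditional independence with strictly positive conditionals, and let ℋ be a set of score functions 𝒳 × 𝒴 → ℝ containing some r* with σ(r*(x,y) − r*(x,y')) = ω_P(y ≻ y' | x) for all x and y ≠ y' with P(x,y,y') + P(x,y',y) > 0. Then (1) r* minimizes the population BT objective over ℋ, i.e., L_BT(r*) ≤ L_BT(r) for all r ∈ ℋ; and (2) every r̂ ∈ ℋ with L_BT(r̂) ≤ L_BT(r) for all r ∈ ℋ satisfies σ(r̂(x,y) − r̂(x,y')) = ω_P(y ≻ y' | x) for all x and y ≠ y' with P(x,y,y') + P(x,y',y) > 0. -/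
open scoped BigOperators

lemma sigmoid_pos (t : ℝ) : 0 < sigmoid t := by
  unfold sigmoid
  positivity

lemma sigmoid_lt_one (t : ℝ) : sigmoid t < 1 := by
  unfold sigmoid
  rw [div_lt_one (by positivity)]
  nlinarith [Real.exp_pos (-t)]

lemma sigmoid_neg (t : ℝ) : sigmoid (-t) = 1 - sigmoid t := by
  unfold sigmoid
  have h1 : (0:ℝ) < 1 + Real.exp (-t) := by positivity
  have h2 : (0:ℝ) < 1 + Real.exp (- -t) := by positivity
  have h3 : Real.exp (-t) * Real.exp t = 1 := by
    rw [← Real.exp_add]; simp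
  field_simp
  nlinarith

lemma gibbs_le (a b s : ℝ) (ha : 0 < a) (hb : 0 < b) (hs0 : 0 < s) (hs1 : s < 1) :
    a * Real.log s + b * Real.log (1 - s) ≤
      a * Real.log (a / (a + b)) + b * Real.log (b / (a + b)) := by
  have hab : 0 < a + b := by linarith
  have key1 : Real.log s - Real.log (a / (a + b)) ≤ s * (a + b) / a - 1 := by
    rw [← Real.log_div hs0.ne' (by positivity)]
    have h : s / (a / (a + b)) = s * (a + b) / a := by field_simp
    rw [h]
    exact Real.log_le_sub_one_of_pos (by positivity)
  have key2 : Real.log (1 - s) - Real.log (b / (a + b)) ≤ (1 - s) * (a + b) / b - 1 := by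
    rw [← Real.log_div (by linarith) (by positivity)]
    have h : (1 - s) / (b / (a + b)) = (1 - s) * (a + b) / b := by field_simp
    rw [h]
    exact Real.log_le_sub_one_of_pos (div_pos (mul_pos (by linarith) hab) hb)
  have k1 := mul_le_mul_of_nonneg_left key1 ha.le
  have k2 := mul_le_mul_of_nonneg_left key2 hb.le
  have e1 : a * (s * (a + b) / a - 1) = s * (a + b) - a := by field_simp
  have e2 : b * ((1 - s) * (a + b) / b - 1) = (1 - s) * (a + b) - b := by field_simp
  rw [e1] at k1
  rw [e2] at k2
  nlinarith

lemma gibbs_lt (a b s : ℝ) (ha : 0 < a) (hb : 0 < b) (hs0 : 0 < s) (hs1 : s < 1)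
    (hne : s ≠ a / (a + b)) :
    a * Real.log s + b * Real.log (1 - s) <
      a * Real.log (a / (a + b)) + b * Real.log (b / (a + b)) := by
  have hab : 0 < a + b := by linarith
  have key1 : Real.log s - Real.log (a / (a + b)) < s * (a + b) / a - 1 := by
    rw [← Real.log_div hs0.ne' (by positivity)]
    have h : s / (a / (a + b)) = s * (a + b) / a := by field_simp
    rw [h]
    refine Real.log_lt_sub_one_of_pos (by positivity) ?_
    intro hcontra
    apply hne
    field_simp at hcontra
    field_simp
    linarith
  have key2 : Real.log (1 - s) - Real.log (b / (a + b)) ≤ (1 - s) * (a + b) / b - 1 := by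
    rw [← Real.log_div (by linarith) (by positivity)]
    have h : (1 - s) / (b / (a + b)) = (1 - s) * (a + b) / b := by field_simp
    rw [h]
    exact Real.log_le_sub_one_of_pos (div_pos (mul_pos (by linarith) hab) hb)
  have k1 := mul_lt_mul_of_pos_left key1 ha
  have k2 := mul_le_mul_of_nonneg_left key2 hb.le
  have e1 : a * (s * (a + b) / a - 1) = s * (a + b) - a := by field_simp
  have e2 : b * ((1 - s) * (a + b) / b - 1) = (1 - s) * (a + b) - b := by field_simp
  rw [e1] at k1
  rw [e2] at k2
  nlinarith

/-- Paired term of the BT objective. -/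
noncomputable def Gterm {X Y : Type*} (P : X → Y → Y → ℝ) (r : X → Y → ℝ)
    (x : X) (y y' : Y) : ℝ :=
  P x y y' * Real.log (sigmoid (r x y - r x y')) +
    P x y' y * Real.log (sigmoid (r x y' - r x y))

/-- Consistency under positive–negative conditional independence: if P factorizes with strictly
positive conditionals and ℋ contains a score r* realizing the CPRD, then (1) r* minimizes the
population BT objective over ℋ, and (2) every minimizer of the population BT objective over ℋ
realizes the CPRD on the support of the comparison distribution. -/
theorem stmt_7 {X Y : Type*} [Fintype X] [Fintype Y] [Nonempty X] [Nonempty Y]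
    (P : X → Y → Y → ℝ) (PX : X → ℝ) (pplus pminus : X → Y → ℝ)
    (hPX0 : ∀ x, 0 ≤ PX x) (hPX1 : ∑ x, PX x = 1)
    (hp0 : ∀ x y, 0 < pplus x y) (hm0 : ∀ x y, 0 < pminus x y)
    (hp1 : ∀ x, ∑ y, pplus x y = 1) (hm1 : ∀ x, ∑ y, pminus x y = 1)
    (hfact : ∀ x yp ym, P x yp ym = PX x * pplus x yp * pminus x ym)
    (H : Set (X → Y → ℝ)) (rstar : X → Y → ℝ) (hrstarH : rstar ∈ H)
    (hrstar : ∀ x : X, ∀ y y' : Y, y ≠ y' → 0 < P x y y' + P x y' y →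
      sigmoid (rstar x y - rstar x y') = P x y y' / (P x y y' + P x y' y)) :
    (∀ r ∈ H, LBT P rstar ≤ LBT P r) ∧
    (∀ rhat ∈ H, (∀ r ∈ H, LBT P rhat ≤ LBT P r) →
      ∀ x : X, ∀ y y' : Y, y ≠ y' → 0 < P x y y' + P x y' y →
        sigmoid (rhat x y - rhat x y') = P x y y' / (P x y y' + P x y' y)) := by
  have hPnn : ∀ x y y', 0 ≤ P x y y' := by
    intro x y y'
    rw [hfact]
    have := hPX0 x
    have := hp0 x y
    have := hm0 x y'
    positivity
  -- key facts when the pair has positive mass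
  have hposab : ∀ x (y y' : Y), 0 < P x y y' + P x y' y → 0 < P x y y' ∧ 0 < P x y' y := by
    intro x y y' hab
    have hPXpos : 0 < PX x := by
      rcases lt_or_eq_of_le (hPX0 x) with h | h
      · exact h
      · exfalso
        rw [hfact, hfact, ← h] at hab
        simp at hab
    constructor
    · rw [hfact]; exact mul_pos (mul_pos hPXpos (hp0 x y)) (hm0 x y')
    · rw [hfact]; exact mul_pos (mul_pos hPXpos (hp0 x y')) (hm0 x y)
  -- pointwise inequality
  have hpt : ∀ (r : X → Y → ℝ) x y y', Gterm P r x y y' ≤ Gterm P rstar x y y' := by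
    intro r x y y'
    by_cases hyy : y = y'
    · subst hyy
      simp [Gterm, sub_self]
    · by_cases hab : 0 < P x y y' + P x y' y
      · obtain ⟨ha, hb⟩ := hposab x y y' hab
        have hsst : sigmoid (rstar x y - rstar x y') = P x y y' / (P x y y' + P x y' y) :=
          hrstar x y y' hyy hab
        have hsst' : sigmoid (rstar x y' - rstar x y) = P x y' y / (P x y y' + P x y' y) := by
          have := hrstar x y' y (Ne.symm hyy) (by linarith)
          rw [this, add_comm (P x y' y) (P x y y')]
        have hrneg : r x y' - r x y = -(r x y - r x y') := by ring
        unfold Gterm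
        rw [hsst, hsst', hrneg, sigmoid_neg]
        exact gibbs_le _ _ _ ha hb (sigmoid_pos _) (sigmoid_lt_one _)
      · have h1 : P x y y' = 0 := by
          have := hPnn x y y'; have := hPnn x y' y
          linarith
        have h2 : P x y' y = 0 := by
          have := hPnn x y y'; have := hPnn x y' y
          linarith
        simp [Gterm, h1, h2]
  -- sum identity
  have hF : ∀ r : X → Y → ℝ,
      ∑ x, ∑ y, ∑ y', Gterm P r x y y' =
        2 * ∑ x, ∑ y, ∑ y', P x y y' * Real.log (sigmoid (r x y - r x y')) := by
    intro r
    rw [Finset.mul_sum]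
    refine Finset.sum_congr rfl (fun x _ => ?_)
    unfold Gterm
    have hswap : ∑ y, ∑ y', P x y' y * Real.log (sigmoid (r x y' - r x y)) =
        ∑ y, ∑ y', P x y y' * Real.log (sigmoid (r x y - r x y')) := by
      rw [Finset.sum_comm]
    simp only [Finset.sum_add_distrib]
    rw [hswap]
    ring
  have hLBT : ∀ r : X → Y → ℝ, LBT P r =
      -(1/2) * ∑ x, ∑ y, ∑ y', Gterm P r x y y' := by
    intro r
    rw [hF r, LBT]
    ring
  constructor
  · intro r _
    rw [hLBT, hLBT]
    have : ∑ x, ∑ y, ∑ y', Gterm P r x y y' ≤ ∑ x, ∑ y, ∑ y', Gterm P rstar x y y' :=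
      Finset.sum_le_sum fun x _ => Finset.sum_le_sum fun y _ =>
        Finset.sum_le_sum fun y' _ => hpt r x y y'
    linarith
  · intro rhat hrhatH hmin x y y' hyy hab
    by_contra hne
    obtain ⟨ha, hb⟩ := hposab x y y' hab
    -- strict inequality at (x, y, y')
    have hstrict : Gterm P rhat x y y' < Gterm P rstar x y y' := by
      have hsst : sigmoid (rstar x y - rstar x y') = P x y y' / (P x y y' + P x y' y) :=
        hrstar x y y' hyy hab
      have hsst' : sigmoid (rstar x y' - rstar x y) = P x y' y / (P x y y' + P x y' y) := by
        have := hrstar x y' y (Ne.symm hyy) (by linarith)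
        rw [this, add_comm (P x y' y) (P x y y')]
      have hrneg : rhat x y' - rhat x y = -(rhat x y - rhat x y') := by ring
      unfold Gterm
      rw [hsst, hsst', hrneg, sigmoid_neg]
      exact gibbs_lt _ _ _ ha hb (sigmoid_pos _) (sigmoid_lt_one _) hne
    -- strict inequality for the sums, via flattening to a product type
    have hflat : ∀ r : X → Y → ℝ,
        ∑ p : X × Y × Y, Gterm P r p.1 p.2.1 p.2.2 = ∑ x, ∑ y, ∑ y', Gterm P r x y y' := by
      intro r
      rw [Fintype.sum_prod_type]
      exact Finset.sum_congr rfl fun x _ => Fintype.sum_prod_type _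
    have hlt : ∑ p : X × Y × Y, Gterm P rhat p.1 p.2.1 p.2.2 <
        ∑ p : X × Y × Y, Gterm P rstar p.1 p.2.1 p.2.2 := by
      refine Finset.sum_lt_sum (fun p _ => hpt rhat p.1 p.2.1 p.2.2)
        ⟨(x, y, y'), Finset.mem_univ _, hstrict⟩
    rw [hflat rhat, hflat rstar] at hlt
    have h1 := hmin rstar hrstarH
    rw [hLBT rhat, hLBT rstar] at h1
    linarith
end

section
/- For any score functions r, r* : 𝒳 × 𝒴 → ℝ and any k > 0, the accuracy satisfies Acc_Q(r) ≥ Pr_{Q_pair}( |Δ_{r*}(x,y,y')| ≥ k ) − (1/k²)·E_{Q_pair}[ (Δ_r(x,y,y') − Δ_{r*}(x,y,y'))² ]. -/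
open scoped BigOperators

/-- Probability of an event under Q_pair, where x ∼ Q_x and y, y' are i.i.d. from Q_y(·|x). -/
noncomputable def prQpair {X Y : Type*} [Fintype X] [Fintype Y]
    (Qx : X → ℝ) (Qy : X → Y → ℝ) (E : X → Y → Y → Prop) [∀ x y y', Decidable (E x y y')] : ℝ :=
  ∑ x, ∑ y, ∑ y', Qx x * Qy x y * Qy x y' * (if E x y y' then 1 else 0)

/-- Expectation under Q_pair, where x ∼ Q_x and y, y' are i.i.d. from Q_y(·|x). -/
noncomputable def eQpair {X Y : Type*} [Fintype X] [Fintype Y]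
    (Qx : X → ℝ) (Qy : X → Y → ℝ) (f : X → Y → Y → ℝ) : ℝ :=
  ∑ x, ∑ y, ∑ y', Qx x * Qy x y * Qy x y' * f x y y'


lemma key_pt (a b k : ℝ) (hk : 0 < k) :
    (if k ≤ |b| then (1:ℝ) else 0) - 1 / k ^ 2 * (a - b) ^ 2 ≤
      (if Real.sign a = Real.sign b then (1:ℝ) else 0) := by
  have hk2 : (0:ℝ) < k ^ 2 := by positivity
  by_cases h : Real.sign a = Real.sign b
  · simp only [h, if_true]
    have : 0 ≤ 1 / k ^ 2 * (a - b) ^ 2 := by positivity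
    split_ifs <;> linarith
  · simp only [h, if_false]
    by_cases hb : k ≤ |b|
    · simp only [hb, if_true]
      have hab : k ≤ |a - b| := by
        rcases abs_cases b with ⟨hb1, hb2⟩ | ⟨hb1, hb2⟩
        · have hbpos : 0 < b := by linarith
          have hsb : Real.sign b = 1 := Real.sign_of_pos hbpos
          have ha : a ≤ 0 := by
            by_contra ha'
            exact h (by rw [Real.sign_of_pos (lt_of_not_ge ha'), hsb])
          rw [abs_sub_comm, abs_of_nonneg (by linarith)]; linarith
        · have hbneg : b < 0 := by linarith
          have hsb : Real.sign b = -1 := Real.sign_of_neg hbneg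
          have ha : 0 ≤ a := by
            by_contra ha'
            exact h (by rw [Real.sign_of_neg (lt_of_not_ge ha'), hsb])
          rw [abs_of_nonneg (by linarith)]; linarith
      have : k ^ 2 ≤ (a - b) ^ 2 := by
        calc k ^ 2 ≤ |a - b| ^ 2 := by nlinarith [abs_nonneg (a - b)]
        _ = (a - b) ^ 2 := sq_abs _
      rw [div_mul_eq_mul_div, one_mul, sub_nonpos, le_div_iff₀ hk2, one_mul]
      exact this
    · simp only [hb, if_false]
      have : 0 ≤ 1 / k ^ 2 * (a - b) ^ 2 := by positivity
      linarith

/-- Accuracy bound with a margin level k: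
Acc_Q(r) ≥ Pr_{Q_pair}( |Δ_{r*}| ≥ k ) − (1/k²) · E_{Q_pair}[ (Δ_r − Δ_{r*})² ]. -/
theorem stmt_9 {X Y : Type*} [Fintype X] [Fintype Y] [Nonempty X] [Nonempty Y]
    (Qx : X → ℝ) (Qy : X → Y → ℝ)
    (hQx0 : ∀ x, 0 ≤ Qx x) (hQx1 : ∑ x, Qx x = 1)
    (hQy0 : ∀ x y, 0 ≤ Qy x y) (hQy1 : ∀ x, ∑ y, Qy x y = 1)
    (r rstar : X → Y → ℝ) (k : ℝ) (hk : 0 < k) :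
    prQpair Qx Qy (fun x y y' =>
        Real.sign (r x y - r x y') = Real.sign (rstar x y - rstar x y')) ≥
      prQpair Qx Qy (fun x y y' => k ≤ |rstar x y - rstar x y'|) -
        (1 / k ^ 2) *
          eQpair Qx Qy (fun x y y' =>
            ((r x y - r x y') - (rstar x y - rstar x y')) ^ 2) := by
  unfold prQpair eQpair
  rw [ge_iff_le]
  simp only [Finset.mul_sum, ← Finset.sum_sub_distrib]
  apply Finset.sum_le_sum; intro x _
  apply Finset.sum_le_sum; intro y _
  apply Finset.sum_le_sum; intro y' _
  have hw : 0 ≤ Qx x * Qy x y * Qy x y' :=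
    mul_nonneg (mul_nonneg (hQx0 x) (hQy0 x y)) (hQy0 x y')
  have := mul_le_mul_of_nonneg_left
    (key_pt (r x y - r x y') (rstar x y - rstar x y') k hk) hw
  ring_nf at this ⊢
  linarith
end

section
/- Let P be BT-consistent with respect to r* with strictly positive negative conditional and P_X strictly positive, let B > 0, and let r, r* : 𝒳 × 𝒴 → ℝ satisfy |r(x,y)| ≤ B and |r*(x,y)| ≤ B for all x, y. With c_B = σ(2B)(1 − σ(2B)), one has c_B · E_{P̃}[ (Δ_r(x,y,y') − Δ_{r*}(x,y,y'))² ] ≤ (2/Z)·( L_BT(r) − L_BT(r*) ). -/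
open scoped BigOperators

/-- Normalizing constant Z of the comparison distribution P̃. -/
noncomputable def Zconst {X Y : Type*} [Fintype X] [Fintype Y] [DecidableEq Y]
    (P : X → Y → Y → ℝ) : ℝ :=
  (∑ x, ∑ y, ∑ y', if y ≠ y' then P x y y' + P x y' y else 0) / 2

/-- Expectation under the comparison distribution P̃ of a symmetric function of (x,{y,y'}). -/
noncomputable def ePt {X Y : Type*} [Fintype X] [Fintype Y] [DecidableEq Y]
    (P : X → Y → Y → ℝ) (f : X → Y → Y → ℝ) : ℝ :=
  (∑ x, ∑ y, ∑ y', if y ≠ y' then (P x y y' + P x y' y) * f x y y' else 0) /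
    (2 * Zconst P)

noncomputable def sp (t : ℝ) : ℝ := Real.log (1 + Real.exp t)

lemma one_add_exp_pos (t : ℝ) : 0 < 1 + Real.exp t := by positivity

lemma sigmoid_eq_exp (t : ℝ) : sigmoid t = Real.exp t / (1 + Real.exp t) := by
  unfold sigmoid
  rw [Real.exp_neg]
  have h := Real.exp_pos t
  field_simp
  ring

lemma hasDerivAt_sp (t : ℝ) : HasDerivAt sp (sigmoid t) t := by
  have h1 : HasDerivAt (fun s : ℝ => 1 + Real.exp s) (Real.exp t) t := by
    simpa using (Real.hasDerivAt_exp t).const_add 1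
  have h2 := h1.log (one_add_exp_pos t).ne'
  show HasDerivAt (fun s => Real.log (1 + Real.exp s)) _ t
  simpa [sigmoid_eq_exp] using h2

lemma hasDerivAt_sigmoid (t : ℝ) :
    HasDerivAt sigmoid (sigmoid t * (1 - sigmoid t)) t := by
  have h0 : HasDerivAt (fun s : ℝ => -s) (-1 : ℝ) t := (hasDerivAt_id t).neg
  have h1 : HasDerivAt (fun s : ℝ => Real.exp (-s)) (-Real.exp (-t)) t := by
    have h := (Real.hasDerivAt_exp (-t)).comp t h0; simp only [mul_neg, mul_one] at h; exact h
  have h2 : HasDerivAt (fun s : ℝ => 1 + Real.exp (-s)) (-Real.exp (-t)) t := h1.const_add 1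
  have h3 := h2.inv (one_add_exp_pos (-t)).ne'
  have h4 : HasDerivAt (fun s : ℝ => (1 + Real.exp (-s))⁻¹)
      (Real.exp (-t) / (1 + Real.exp (-t))^2) t := by
    exact h3.congr_deriv (by ring)
  have heq : sigmoid t * (1 - sigmoid t) = Real.exp (-t) / (1 + Real.exp (-t))^2 := by
    unfold sigmoid
    have h := one_add_exp_pos (-t)
    field_simp
    ring
  rw [heq]
  have : sigmoid = fun s : ℝ => (1 + Real.exp (-s))⁻¹ := by
    funext s; unfold sigmoid; rw [one_div]
  rw [this]
  exact h4

lemma sigmoid_deriv_lb {B t : ℝ} (hB : 0 < B) (ht : |t| ≤ 2*B) :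
    sigmoid (2*B) * (1 - sigmoid (2*B)) ≤ sigmoid t * (1 - sigmoid t) := by
  have habs := abs_le.1 ht
  have e : ∀ s : ℝ, sigmoid s * (1 - sigmoid s) = Real.exp (-s) / (1 + Real.exp (-s))^2 := by
    intro s
    unfold sigmoid
    have h := one_add_exp_pos (-s)
    field_simp
    ring
  rw [e, e]
  set u := Real.exp (-t) with hu
  set v := Real.exp (-(2*B)) with hv
  have hu0 : 0 < u := Real.exp_pos _
  have hv0 : 0 < v := Real.exp_pos _
  have hvu : v ≤ u := Real.exp_le_exp.2 (by linarith)
  have huv : u * v ≤ 1 := by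
    rw [hu, hv, ← Real.exp_add]
    exact Real.exp_le_one_iff.2 (by linarith)
  rw [div_le_div_iff₀ (by positivity) (by positivity)]
  nlinarith [mul_nonneg (sub_nonneg.2 hvu) (sub_nonneg.2 huv)]

lemma key {B : ℝ} (hB : 0 < B) {a b : ℝ} (ha : |a| ≤ 2*B) (hb : |b| ≤ 2*B) :
    sigmoid (2*B) * (1 - sigmoid (2*B)) / 2 * (a-b)^2 ≤
      sp a - sp b - sigmoid b * (a - b) := by
  set c := sigmoid (2*B) * (1 - sigmoid (2*B)) with hc
  have hmem : ∀ t : ℝ, |t| ≤ 2*B → t ∈ Set.Icc (-(2*B)) (2*B) := fun t ht =>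
    Set.mem_Icc.2 ⟨(abs_le.1 ht).1, (abs_le.1 ht).2⟩
  have hh : ∀ t : ℝ, HasDerivAt (fun s => sp s - c/2*s^2) (sigmoid t - c*t) t := by
    intro t
    have h2 : HasDerivAt (fun s : ℝ => c/2*s^2) (c*t) t := by
      have := (hasDerivAt_pow 2 t).const_mul (c/2)
      exact this.congr_deriv (by push_cast; ring)
    exact (hasDerivAt_sp t).sub h2
  have hh' : ∀ t : ℝ, HasDerivAt (fun s => sigmoid s - c*s) (sigmoid t * (1 - sigmoid t) - c) t := by
    intro t
    have h2 : HasDerivAt (fun s : ℝ => c*s) c t := by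
      simpa using (hasDerivAt_id t).const_mul c
    exact (hasDerivAt_sigmoid t).sub h2
  have hconv : ConvexOn ℝ (Set.Icc (-(2*B)) (2*B)) (fun s => sp s - c/2*s^2) := by
    apply convexOn_of_hasDerivWithinAt2_nonneg (convex_Icc _ _)
      (f' := fun t => sigmoid t - c*t) (f'' := fun t => sigmoid t * (1 - sigmoid t) - c)
    · exact fun t _ => (hh t).continuousAt.continuousWithinAt
    · exact fun t _ => (hh t).hasDerivWithinAt
    · exact fun t _ => (hh' t).hasDerivWithinAt
    · intro t ht
      rw [interior_Icc] at ht
      have htB : |t| ≤ 2*B := abs_le.2 ⟨ht.1.le, ht.2.le⟩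
      have := sigmoid_deriv_lb hB htB
      rw [← hc] at this
      linarith
  rcases lt_trichotomy a b with h | h | h
  · have hs := hconv.slope_le_of_hasDerivAt (hmem a ha) (hmem b hb) h (hh b)
    rw [slope_def_field] at hs
    rw [div_le_iff₀ (by linarith)] at hs
    nlinarith [hs]
  · rw [h]; simp
  · have hs := hconv.le_slope_of_hasDerivAt (hmem b hb) (hmem a ha) h (hh b)
    rw [slope_def_field] at hs
    rw [le_div_iff₀ (by linarith)] at hs
    nlinarith [hs]

lemma log_sigmoid (t : ℝ) : Real.log (sigmoid t) = t - sp t := by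
  rw [sigmoid_eq_exp, Real.log_div (Real.exp_ne_zero t) (one_add_exp_pos t).ne',
    Real.log_exp, sp]

lemma sp_neg (t : ℝ) : sp (-t) = sp t - t := by
  unfold sp
  have h : (1 : ℝ) + Real.exp (-t) = (1 + Real.exp t) / Real.exp t := by
    rw [Real.exp_neg]
    have := Real.exp_pos t
    field_simp
    ring
  rw [h, Real.log_div (one_add_exp_pos t).ne' (Real.exp_ne_zero t), Real.log_exp]


/-- Strong-convexity bound on the excess BT risk for a BT-consistent distribution:
c_B · E_{P̃}[(Δ_r − Δ_{r*})²] ≤ (2/Z)·(L_BT(r) − L_BT(r*)), where c_B = σ(2B)(1−σ(2B)). -/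
theorem stmt_14 {X Y : Type*} [Fintype X] [Fintype Y] [DecidableEq Y]
    [Nonempty X] [Nonempty Y]
    (P : X → Y → Y → ℝ) (PX : X → ℝ) (pplus pminus : X → Y → ℝ)
    (rstar : X → Y → ℝ)
    (hPX0 : ∀ x, 0 < PX x) (hPX1 : ∑ x, PX x = 1)
    (hm0 : ∀ x y, 0 < pminus x y)
    (hp1 : ∀ x, ∑ y, pplus x y = 1) (hm1 : ∀ x, ∑ y, pminus x y = 1)
    (hlink : ∀ x y, pplus x y = Real.exp (rstar x y) * pminus x y)
    (hfact : ∀ x yp ym, P x yp ym = PX x * pplus x yp * pminus x ym)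
    (hZ : 0 < Zconst P)
    (B : ℝ) (hB : 0 < B) (r : X → Y → ℝ)
    (hr : ∀ x y, |r x y| ≤ B) (hrstar : ∀ x y, |rstar x y| ≤ B) :
    sigmoid (2 * B) * (1 - sigmoid (2 * B)) *
        ePt P (fun x y y' => ((r x y - r x y') - (rstar x y - rstar x y')) ^ 2) ≤
      (2 / Zconst P) * (LBT P r - LBT P rstar) := by
  classical
  set c := sigmoid (2 * B) * (1 - sigmoid (2 * B)) with hc
  have hP0 : ∀ x yp ym, 0 < P x yp ym := by
    intro x yp ym
    rw [hfact x yp ym, hlink x yp]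
    have h1 := hPX0 x
    have h2 := hm0 x yp
    have h3 := hm0 x ym
    have h4 := Real.exp_pos (rstar x yp)
    positivity
  -- pointwise inequality
  have hpt : ∀ x y y',
      (if y ≠ y' then
          c * ((P x y y' + P x y' y) * ((r x y - r x y' - (rstar x y - rstar x y')) ^ 2))
        else 0) ≤
        2 * (P x y y' * (Real.log (sigmoid (rstar x y - rstar x y')) -
              Real.log (sigmoid (r x y - r x y'))) +
            P x y' y * (Real.log (sigmoid (rstar x y' - rstar x y)) -
              Real.log (sigmoid (r x y' - r x y)))) := by
    intro x y y'
    by_cases hyy : y = y'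
    · subst hyy
      simp
    · rw [if_pos hyy]
      set a := r x y - r x y' with hadef
      set b := rstar x y - rstar x y' with hbdef
      have haB : |a| ≤ 2 * B := by
        rw [hadef]
        calc |r x y - r x y'| ≤ |r x y| + |r x y'| := abs_sub _ _
          _ ≤ 2 * B := by have := hr x y; have := hr x y'; linarith
      have hbB : |b| ≤ 2 * B := by
        rw [hbdef]
        calc |rstar x y - rstar x y'| ≤ |rstar x y| + |rstar x y'| := abs_sub _ _
          _ ≤ 2 * B := by have := hrstar x y; have := hrstar x y'; linarith
      have hkey := key hB haB hbB
      rw [← hc] at hkey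
      have hexp : Real.exp (-b) * Real.exp (rstar x y) = Real.exp (rstar x y') := by
        rw [← Real.exp_add, hbdef]
        ring_nf
      have hPP : P x y' y = Real.exp (-b) * P x y y' := by
        rw [hfact x y' y, hfact x y y', hlink x y', hlink x y]
        linear_combination (-(PX x * pminus x y * pminus x y')) * hexp
      have hsig : sigmoid b * (P x y y' + P x y' y) = P x y y' := by
        rw [hPP]
        unfold sigmoid
        have h := one_add_exp_pos (-b)
        field_simp
      set w := P x y y' + P x y' y with hwdef
      have hw0 : (0 : ℝ) ≤ w := by
        have := hP0 x y y'
        have := hP0 x y' y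
        rw [hwdef]; linarith
      rw [show r x y' - r x y = -a by rw [hadef]; ring,
        show rstar x y' - rstar x y = -b by rw [hbdef]; ring,
        log_sigmoid, log_sigmoid, log_sigmoid, log_sigmoid, sp_neg, sp_neg]
      have h1 := mul_le_mul_of_nonneg_left hkey hw0
      calc c * (w * (a - b) ^ 2) = 2 * (w * (c / 2 * (a - b) ^ 2)) := by ring
        _ ≤ 2 * (w * (sp a - sp b - sigmoid b * (a - b))) := by linarith
        _ = 2 * (P x y y' * (b - sp b - (a - sp a)) +
              P x y' y * (-b - (sp b - b) - (-a - (sp a - a)))) := by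
            linear_combination (-2 * (a - b)) * hsig
  -- sum form of the excess risk
  have hDsum : LBT P r - LBT P rstar =
      ∑ x, ∑ y, ∑ y', P x y y' * (Real.log (sigmoid (rstar x y - rstar x y')) -
        Real.log (sigmoid (r x y - r x y'))) := by
    rw [LBT, LBT, neg_sub_neg]
    simp only [← Finset.sum_sub_distrib, ← mul_sub]
  have hswap : (∑ x : X, ∑ y : Y, ∑ y' : Y,
        P x y y' * (Real.log (sigmoid (rstar x y - rstar x y')) -
          Real.log (sigmoid (r x y - r x y')))) =
      ∑ x : X, ∑ y : Y, ∑ y' : Y,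
        P x y' y * (Real.log (sigmoid (rstar x y' - rstar x y)) -
          Real.log (sigmoid (r x y' - r x y))) :=
    Finset.sum_congr rfl fun x _ => Finset.sum_comm
  have h2D : 2 * (LBT P r - LBT P rstar) =
      ∑ x : X, ∑ y : Y, ∑ y' : Y,
        (P x y y' * (Real.log (sigmoid (rstar x y - rstar x y')) -
            Real.log (sigmoid (r x y - r x y'))) +
          P x y' y * (Real.log (sigmoid (rstar x y' - rstar x y)) -
            Real.log (sigmoid (r x y' - r x y)))) := by
    simp only [Finset.sum_add_distrib]
    rw [← hswap, ← hDsum]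
    ring
  have hmain : c * (∑ x : X, ∑ y : Y, ∑ y' : Y,
        if y ≠ y' then (P x y y' + P x y' y) *
          ((r x y - r x y' - (rstar x y - rstar x y')) ^ 2) else 0) ≤
      2 * (2 * (LBT P r - LBT P rstar)) := by
    rw [h2D]
    simp only [Finset.mul_sum, mul_ite, mul_zero]
    refine Finset.sum_le_sum fun x _ => Finset.sum_le_sum fun y _ =>
      Finset.sum_le_sum fun y' _ => hpt x y y'
  rw [ePt]
  have h2Z : (0 : ℝ) < 2 * Zconst P := by linarith
  have e1 : c * ((∑ x : X, ∑ y : Y, ∑ y' : Y,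
      if y ≠ y' then (P x y y' + P x y' y) *
        ((r x y - r x y' - (rstar x y - rstar x y')) ^ 2) else 0) / (2 * Zconst P)) =
      (c * ∑ x : X, ∑ y : Y, ∑ y' : Y,
      if y ≠ y' then (P x y y' + P x y' y) *
        ((r x y - r x y' - (rstar x y - rstar x y')) ^ 2) else 0) / (2 * Zconst P) :=
    (mul_div_assoc _ _ _).symm
  have e2 : (2 / Zconst P) * (LBT P r - LBT P rstar) =
      (2 * (2 * (LBT P r - LBT P rstar))) / (2 * Zconst P) := by
    field_simp
  rw [e1, e2]
  exact div_le_div_of_nonneg_right hmain h2Z.le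
end

section
/- Let 𝒳, 𝒴 be finite nonempty sets, φ : 𝒳 × 𝒴 → ℝ^d a feature map, Q a distribution on 𝒳 × 𝒴 whose features are conditionally centered, i.e., E_{y∼Q_y(·|x)}[φ(x,y)] = 0 for every x with Q_x(x) > 0, and P a probability mass function on 𝒳 × 𝒴 × 𝒴 with comparison distribution P̃. Define Σ_P = E_{(x,{y,y'})∼P̃}[ (φ(x,y) − φ(x,y'))(φ(x,y) − φ(x,y'))ᵀ ] and Σ_Q = E_{(x,y)∼Q}[ φ(x,y)φ(x,y)ᵀ ], and assume Σ_Q is positive definite. Then for the linear hypothesis class ℋ = { (x,y) ↦ wᵀφ(x,y) : w ∈ ℝ^d }, the connectivity degree satisfies λ_conn(P, Q; ℋ) = inf over nonzero w ∈ ℝ^d of (wᵀΣ_P w)/(wᵀΣ_Q w) = λ_min( Σ_Q^{−1/2} Σ_P Σ_Q^{−1/2} ), the smallest eigenvalue of the symmetric matrix Σ_Q^{−1/2} Σ_P Σ_Q^{−1/2}. -/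
open scoped BigOperators
open Matrix
open Classical

/-- The eigenvalues of a real symmetric matrix, listed with multiplicity in
nondecreasing order (the empty list if the matrix is not Hermitian). -/
noncomputable def sortedEigenvalues {d : ℕ} (A : Matrix (Fin d) (Fin d) ℝ) : List ℝ :=
  if h : A.IsHermitian then (Finset.univ.val.map h.eigenvalues).sort (· ≤ ·) else []

/-- Ṽar_Q(r) = E_{x∼Q_x}[ Var_{y∼Q_y(·|x)}[ r(x,y) ] ]. -/
noncomputable def tVar {X Y : Type*} [Fintype X] [Fintype Y]
    (Qx : X → ℝ) (Qy : X → Y → ℝ) (r : X → Y → ℝ) : ℝ :=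
  ∑ x, Qx x * ((∑ y, Qy x y * (r x y) ^ 2) - (∑ y, Qy x y * r x y) ^ 2)

/-- The positive semidefinite square root of a positive semidefinite matrix
(the definition of `Matrix.PosSemidef.sqrt` in the older Mathlib, since removed). -/
noncomputable def posSemidefSqrt {d : ℕ} {A : Matrix (Fin d) (Fin d) ℝ} (hA : A.PosSemidef) :
    Matrix (Fin d) (Fin d) ℝ :=
  hA.1.eigenvectorUnitary.1 * diagonal ((↑) ∘ (√·) ∘ hA.1.eigenvalues) *
    (star hA.1.eigenvectorUnitary : Matrix (Fin d) (Fin d) ℝ)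

private lemma ite_sum_zero {ι : Type*} (c : Prop) [Decidable c] (s : Finset ι) (f : ι → ℝ) :
    (if c then ∑ a ∈ s, f a else 0) = ∑ a ∈ s, if c then f a else 0 := by
  split_ifs <;> simp

private lemma swap3to1 {X Y Z ι : Type*} [Fintype X] [Fintype Y] [Fintype Z] [Fintype ι]
    (h : X → Y → Z → ι → ℝ) :
    ∑ x, ∑ y, ∑ z, ∑ a, h x y z a = ∑ a, ∑ x, ∑ y, ∑ z, h x y z a := by
  calc ∑ x, ∑ y, ∑ z, ∑ a, h x y z a
      = ∑ x, ∑ y, ∑ a, ∑ z, h x y z a :=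
        Finset.sum_congr rfl fun x _ => Finset.sum_congr rfl fun y _ => Finset.sum_comm
    _ = ∑ x, ∑ a, ∑ y, ∑ z, h x y z a := Finset.sum_congr rfl fun x _ => Finset.sum_comm
    _ = ∑ a, ∑ x, ∑ y, ∑ z, h x y z a := Finset.sum_comm

private lemma quad_eq {d : ℕ} (w : Fin d → ℝ) (A : Matrix (Fin d) (Fin d) ℝ) :
    w ⬝ᵥ A *ᵥ w = ∑ a, ∑ b, w a * w b * A a b := by
  simp only [dotProduct, mulVec, Finset.mul_sum]
  exact Finset.sum_congr rfl fun a _ => Finset.sum_congr rfl fun b _ => by ring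

private lemma dot_symm {d : ℕ} (A : Matrix (Fin d) (Fin d) ℝ) (hA : Aᵀ = A)
    (v w : Fin d → ℝ) : v ⬝ᵥ A *ᵥ w = (A *ᵥ v) ⬝ᵥ w := by
  rw [dotProduct_mulVec, ← mulVec_transpose, hA]

private lemma dotProduct_self_pos {d : ℕ} {u : Fin d → ℝ} (hu : u ≠ 0) : 0 < u ⬝ᵥ u := by
  have h1 : 0 ≤ u ⬝ᵥ u := Finset.sum_nonneg fun i _ => mul_self_nonneg _
  rcases h1.lt_or_eq with h | h
  · exact h
  · exact absurd (dotProduct_self_eq_zero.mp h.symm) hu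

private lemma ePt_quad {X Y : Type*} [Fintype X] [Fintype Y] [DecidableEq Y] {d : ℕ}
    (φ : X → Y → Fin d → ℝ) (P : X → Y → Y → ℝ) (SigP : Matrix (Fin d) (Fin d) ℝ)
    (hSigP : ∀ a b, SigP a b =
      ePt P (fun x y y' => (φ x y a - φ x y' a) * (φ x y b - φ x y' b)))
    (w : Fin d → ℝ) :
    ePt P (fun x y y' => ((w ⬝ᵥ φ x y) - w ⬝ᵥ φ x y') ^ 2) = w ⬝ᵥ SigP *ᵥ w := by
  rw [quad_eq]
  simp only [hSigP]
  unfold ePt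
  have expand : ∀ x y y', ((w ⬝ᵥ φ x y) - w ⬝ᵥ φ x y') ^ 2
      = ∑ a, ∑ b, w a * w b * ((φ x y a - φ x y' a) * (φ x y b - φ x y' b)) := by
    intro x y y'
    have h1 : (w ⬝ᵥ φ x y) - w ⬝ᵥ φ x y' = ∑ a, w a * (φ x y a - φ x y' a) := by
      simp [dotProduct, mul_sub, Finset.sum_sub_distrib]
    rw [h1, sq, Finset.sum_mul_sum]
    exact Finset.sum_congr rfl fun a _ => Finset.sum_congr rfl fun b _ => by ring
  have E1 : (∑ x, ∑ y, ∑ y', if y ≠ y' then (P x y y' + P x y' y) *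
        ((w ⬝ᵥ φ x y) - w ⬝ᵥ φ x y') ^ 2 else 0)
      = ∑ x, ∑ y, ∑ y', ∑ a, ∑ b, (if y ≠ y' then w a * w b * ((P x y y' + P x y' y) *
        ((φ x y a - φ x y' a) * (φ x y b - φ x y' b))) else 0) := by
    refine Finset.sum_congr rfl fun x _ => Finset.sum_congr rfl fun y _ =>
      Finset.sum_congr rfl fun y' _ => ?_
    rw [expand, Finset.mul_sum, ite_sum_zero]
    refine Finset.sum_congr rfl fun a _ => ?_
    rw [Finset.mul_sum, ite_sum_zero]
    refine Finset.sum_congr rfl fun b _ => ?_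
    split_ifs with h
    · ring
    · rfl
  have E2 : (∑ x : X, ∑ y : Y, ∑ y' : Y, ∑ a : Fin d, ∑ b : Fin d,
        (if y ≠ y' then w a * w b * ((P x y y' + P x y' y) *
          ((φ x y a - φ x y' a) * (φ x y b - φ x y' b))) else 0))
      = ∑ a : Fin d, ∑ b : Fin d, ∑ x : X, ∑ y : Y, ∑ y' : Y,
        (if y ≠ y' then w a * w b * ((P x y y' + P x y' y) *
          ((φ x y a - φ x y' a) * (φ x y b - φ x y' b))) else 0) := by
    rw [swap3to1 (fun x y y' a => ∑ b, if y ≠ y' then w a * w b * ((P x y y' + P x y' y) *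
      ((φ x y a - φ x y' a) * (φ x y b - φ x y' b))) else 0)]
    exact Finset.sum_congr rfl fun a _ => swap3to1 _
  rw [E1, E2]
  simp_rw [← mul_div_assoc, ← Finset.sum_div]
  congr 1
  refine Finset.sum_congr rfl fun a _ => Finset.sum_congr rfl fun b _ => ?_
  rw [Finset.mul_sum]
  refine Finset.sum_congr rfl fun x _ => ?_
  rw [Finset.mul_sum]
  refine Finset.sum_congr rfl fun y _ => ?_
  rw [Finset.mul_sum]
  refine Finset.sum_congr rfl fun y' _ => ?_
  rw [mul_ite, mul_zero]

private lemma tVar_quad {X Y : Type*} [Fintype X] [Fintype Y] {d : ℕ}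
    (φ : X → Y → Fin d → ℝ) (Qx : X → ℝ) (Qy : X → Y → ℝ)
    (hQx0 : ∀ x, 0 ≤ Qx x)
    (hcenter : ∀ x, 0 < Qx x → ∀ a, ∑ y, Qy x y * φ x y a = 0)
    (SigQ : Matrix (Fin d) (Fin d) ℝ)
    (hSigQ : ∀ a b, SigQ a b = ∑ x, ∑ y, Qx x * Qy x y * (φ x y a * φ x y b))
    (w : Fin d → ℝ) :
    tVar Qx Qy (fun x y => w ⬝ᵥ φ x y) = w ⬝ᵥ SigQ *ᵥ w := by
  have key : ∀ x, Qx x * ((∑ y, Qy x y * (w ⬝ᵥ φ x y) ^ 2) - (∑ y, Qy x y * (w ⬝ᵥ φ x y)) ^ 2)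
      = ∑ y, Qx x * Qy x y * (w ⬝ᵥ φ x y) ^ 2 := by
    intro x
    rcases (hQx0 x).lt_or_eq with hx | hx
    · have hz : ∑ y, Qy x y * (w ⬝ᵥ φ x y) = 0 := by
        have h1 : ∀ y, Qy x y * (w ⬝ᵥ φ x y) = ∑ a, w a * (Qy x y * φ x y a) := by
          intro y
          rw [dotProduct, Finset.mul_sum]
          exact Finset.sum_congr rfl fun a _ => by ring
        simp_rw [h1]
        rw [Finset.sum_comm]
        refine Finset.sum_eq_zero fun a _ => ?_
        rw [← Finset.mul_sum, hcenter x hx a, mul_zero]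
      rw [hz, zero_pow (by norm_num : (2:ℕ) ≠ 0), sub_zero, Finset.mul_sum]
      exact Finset.sum_congr rfl fun y _ => by ring
    · rw [← hx]
      simp
  rw [quad_eq w SigQ]
  simp only [hSigQ]
  unfold tVar
  simp only [key]
  have E2 : (∑ a : Fin d, ∑ b : Fin d, w a * w b * ∑ x, ∑ y, Qx x * Qy x y * (φ x y a * φ x y b))
      = ∑ x, ∑ y, ∑ a : Fin d, ∑ b : Fin d, w a * w b * (Qx x * Qy x y * (φ x y a * φ x y b)) := by
    simp_rw [Finset.mul_sum]
    rw [swap3to1 (fun a b x y => w a * w b * (Qx x * Qy x y * (φ x y a * φ x y b)))]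
    rw [swap3to1 (fun y a b x => w a * w b * (Qx x * Qy x y * (φ x y a * φ x y b)))]
  rw [E2]
  refine Finset.sum_congr rfl fun x _ => Finset.sum_congr rfl fun y _ => ?_
  have hsq : (w ⬝ᵥ φ x y) ^ 2 = ∑ a, ∑ b, (w a * φ x y a) * (w b * φ x y b) := by
    rw [sq, dotProduct, Finset.sum_mul_sum]
  rw [hsq, Finset.mul_sum]
  refine (Finset.sum_congr rfl fun a _ => ?_).symm
  rw [Finset.mul_sum]
  exact Finset.sum_congr rfl fun b _ => by ring

private lemma rayleigh_isLeast {d : ℕ} (M : Matrix (Fin d) (Fin d) ℝ) (hM : M.IsHermitian)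
    (i₀ : Fin d) (hi₀ : ∀ i, hM.eigenvalues i₀ ≤ hM.eigenvalues i) :
    IsLeast {v : ℝ | ∃ u : Fin d → ℝ, u ≠ 0 ∧ v = (u ⬝ᵥ M *ᵥ u) / (u ⬝ᵥ u)}
      (hM.eigenvalues i₀) := by
  constructor
  · refine ⟨⇑(hM.eigenvectorBasis i₀), ?_, ?_⟩
    · have := hM.eigenvectorBasis.orthonormal.ne_zero i₀
      intro h
      apply this
      ext j
      exact congrFun h j
    · have hev := hM.mulVec_eigenvectorBasis i₀
      rw [hev]
      have hpos : (0:ℝ) < (⇑(hM.eigenvectorBasis i₀) : Fin d → ℝ) ⬝ᵥ ⇑(hM.eigenvectorBasis i₀) := by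
        apply dotProduct_self_pos
        have := hM.eigenvectorBasis.orthonormal.ne_zero i₀
        intro h; apply this; ext j; exact congrFun h j
      rw [dotProduct_smul, smul_eq_mul]
      field_simp
  · rintro v ⟨u, hu, rfl⟩
    have hu2 : 0 < u ⬝ᵥ u := dotProduct_self_pos hu
    rw [le_div_iff₀ hu2]
    set U : Matrix (Fin d) (Fin d) ℝ := (hM.eigenvectorUnitary : Matrix (Fin d) (Fin d) ℝ) with hU
    have hU1 : U * star U = 1 := Matrix.mem_unitaryGroup_iff.mp hM.eigenvectorUnitary.2
    have hstar : star U = Uᵀ := by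
      rw [Matrix.star_eq_conjTranspose, conjTranspose_eq_transpose_of_trivial]
    set c : Fin d → ℝ := Uᵀ *ᵥ u with hc
    have huu : u ⬝ᵥ u = ∑ i, c i * c i := by
      have h : u ⬝ᵥ u = c ⬝ᵥ c := by
        calc u ⬝ᵥ u = u ⬝ᵥ ((U * Uᵀ) *ᵥ u) := by rw [← hstar, hU1, one_mulVec]
        _ = u ⬝ᵥ (U *ᵥ (Uᵀ *ᵥ u)) := by rw [← mulVec_mulVec]
        _ = (u ᵥ* U) ⬝ᵥ (Uᵀ *ᵥ u) := by rw [dotProduct_mulVec]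
        _ = c ⬝ᵥ c := by rw [← mulVec_transpose]
      rw [h]; rfl
    have hMu : u ⬝ᵥ M *ᵥ u = ∑ i, hM.eigenvalues i * (c i * c i) := by
      have hspec := hM.spectral_theorem
      calc u ⬝ᵥ M *ᵥ u
          = u ⬝ᵥ (U * diagonal (RCLike.ofReal ∘ hM.eigenvalues) * star U) *ᵥ u := by
            rw [← (show M = U * diagonal (RCLike.ofReal ∘ hM.eigenvalues) * star U from hspec)]
        _ = u ⬝ᵥ (U *ᵥ (diagonal (RCLike.ofReal ∘ hM.eigenvalues) *ᵥ (Uᵀ *ᵥ u))) := by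
            rw [← hstar, ← mulVec_mulVec, ← mulVec_mulVec]
        _ = c ⬝ᵥ (diagonal (RCLike.ofReal ∘ hM.eigenvalues) *ᵥ c) := by
            rw [dotProduct_mulVec, ← mulVec_transpose]
        _ = ∑ i, hM.eigenvalues i * (c i * c i) := by
            simp [dotProduct, mulVec_diagonal, RCLike.ofReal]
            exact Finset.sum_congr rfl fun i _ => by ring
    rw [hMu, huu, Finset.mul_sum]
    exact Finset.sum_le_sum fun i _ => by
      have := mul_self_nonneg (c i)
      nlinarith [hi₀ i]

private lemma sortedEigenvalues_head {d : ℕ} (hd : 0 < d) (M : Matrix (Fin d) (Fin d) ℝ)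
    (hM : M.IsHermitian) (i₀ : Fin d) (hi₀ : ∀ i, hM.eigenvalues i₀ ≤ hM.eigenvalues i) :
    (sortedEigenvalues M).getD 0 0 = hM.eigenvalues i₀ := by
  have hse : sortedEigenvalues M = (Finset.univ.val.map hM.eigenvalues).sort (· ≤ ·) := by
    rw [sortedEigenvalues, dif_pos hM]
  have hlen : (sortedEigenvalues M).length = d := by
    rw [hse, Multiset.length_sort, Multiset.card_map]
    simp
  rcases hL : sortedEigenvalues M with _ | ⟨a, t⟩
  · rw [hL] at hlen; simp at hlen; omega
  · simp only [List.getD_cons_zero]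
    have hmem : a ∈ (Finset.univ.val.map hM.eigenvalues) := by
      rw [← Multiset.mem_sort (· ≤ ·), ← hse, hL]; exact List.mem_cons_self
    obtain ⟨i, _, hi⟩ := Multiset.mem_map.mp hmem
    have h1 : hM.eigenvalues i₀ ≤ a := hi ▸ hi₀ i
    have h2 : a ≤ hM.eigenvalues i₀ := by
      have hmem0 : hM.eigenvalues i₀ ∈ (a :: t : List ℝ) := by
        rw [← hL, hse, Multiset.mem_sort]
        exact Multiset.mem_map.mpr ⟨i₀, Finset.mem_univ i₀, rfl⟩
      have hsorted : List.Pairwise (· ≤ ·) (a :: t) := by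
        rw [← hL, hse]; exact Multiset.pairwise_sort ..
      rcases List.mem_cons.mp hmem0 with h | h
      · exact le_of_eq h.symm
      · exact List.rel_of_pairwise_cons hsorted h
    linarith

/-- Connectivity degree for linear Bradley–Terry: with conditionally centered features and
positive definite Σ_Q, for the linear hypothesis class ℋ = {(x,y) ↦ wᵀφ(x,y)},
λ_conn(P, Q; ℋ) = inf_{w ≠ 0} (wᵀΣ_P w)/(wᵀΣ_Q w) = λ_min(Σ_Q^{−1/2} Σ_P Σ_Q^{−1/2}). -/
theorem stmt_19 {X Y : Type*} [Fintype X] [Fintype Y] [DecidableEq Y]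
    [Nonempty X] [Nonempty Y] (d : ℕ)
    (φ : X → Y → (Fin d → ℝ))
    (P : X → Y → Y → ℝ)
    (hP0 : ∀ x y y', 0 ≤ P x y y')
    (hP1 : ∑ x, ∑ y, ∑ y', P x y y' = 1)
    (hZ : 0 < Zconst P)
    (Qx : X → ℝ) (Qy : X → Y → ℝ)
    (hQx0 : ∀ x, 0 ≤ Qx x) (hQx1 : ∑ x, Qx x = 1)
    (hQy0 : ∀ x y, 0 ≤ Qy x y) (hQy1 : ∀ x, ∑ y, Qy x y = 1)
    (hcenter : ∀ x, 0 < Qx x → ∀ a, ∑ y, Qy x y * φ x y a = 0)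
    (SigP SigQ : Matrix (Fin d) (Fin d) ℝ)
    (hSigP : ∀ a b, SigP a b =
      ePt P (fun x y y' => (φ x y a - φ x y' a) * (φ x y b - φ x y' b)))
    (hSigQ : ∀ a b, SigQ a b = ∑ x, ∑ y, Qx x * Qy x y * (φ x y a * φ x y b))
    (hQpd : SigQ.PosDef)
    (H : Set (X → Y → ℝ))
    (hH : H = {r : X → Y → ℝ | ∃ w : Fin d → ℝ, ∀ x y, r x y = w ⬝ᵥ φ x y}) :
    sInf {v : ℝ | ∃ f ∈ H, ∃ g ∈ H, 0 < tVar Qx Qy (f - g) ∧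
        v = ePt P (fun x y y' => ((f x y - f x y') - (g x y - g x y')) ^ 2) /
            tVar Qx Qy (f - g)} =
      sInf {v : ℝ | ∃ w : Fin d → ℝ, w ≠ 0 ∧
        v = (w ⬝ᵥ SigP.mulVec w) / (w ⬝ᵥ SigQ.mulVec w)} ∧
    sInf {v : ℝ | ∃ w : Fin d → ℝ, w ≠ 0 ∧
        v = (w ⬝ᵥ SigP.mulVec w) / (w ⬝ᵥ SigQ.mulVec w)} =
      (sortedEigenvalues
        ((posSemidefSqrt hQpd.posSemidef)⁻¹ * SigP * (posSemidefSqrt hQpd.posSemidef)⁻¹)).getD 0 0 := by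
  -- Step 1: the two variational sets coincide
  have hQposdot : ∀ w : Fin d → ℝ, w ≠ 0 → 0 < w ⬝ᵥ SigQ *ᵥ w := by
    intro w hw
    simpa using hQpd.dotProduct_mulVec_pos hw
  have hsets : {v : ℝ | ∃ f ∈ H, ∃ g ∈ H, 0 < tVar Qx Qy (f - g) ∧
        v = ePt P (fun x y y' => ((f x y - f x y') - (g x y - g x y')) ^ 2) /
            tVar Qx Qy (f - g)}
      = {v : ℝ | ∃ w : Fin d → ℝ, w ≠ 0 ∧
        v = (w ⬝ᵥ SigP.mulVec w) / (w ⬝ᵥ SigQ.mulVec w)} := by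
    ext v
    simp only [Set.mem_setOf_eq]
    constructor
    · rintro ⟨f, hf, g, hg, hvar, rfl⟩
      rw [hH] at hf hg
      obtain ⟨wf, hwf⟩ := hf
      obtain ⟨wg, hwg⟩ := hg
      have hfg : (f - g) = fun x y => (wf - wg) ⬝ᵥ φ x y := by
        funext x y
        simp [Pi.sub_apply, hwf x y, hwg x y, sub_dotProduct]
      have hvar' : tVar Qx Qy (f - g) = (wf - wg) ⬝ᵥ SigQ *ᵥ (wf - wg) := by
        rw [hfg]
        exact tVar_quad φ Qx Qy hQx0 hcenter SigQ hSigQ (wf - wg)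
      refine ⟨wf - wg, ?_, ?_⟩
      · intro h0
        rw [h0] at hvar'
        simp only [zero_dotProduct] at hvar'
        rw [hvar'] at hvar
        exact lt_irrefl 0 hvar
      · rw [hvar']
        congr 1
        rw [← ePt_quad φ P SigP hSigP (wf - wg)]
        congr 1
        funext x y y'
        rw [hwf x y, hwf x y', hwg x y, hwg x y']
        simp only [sub_dotProduct]
        ring
    · rintro ⟨w, hw, rfl⟩
      refine ⟨fun x y => w ⬝ᵥ φ x y, ?_, 0, ?_, ?_, ?_⟩
      · rw [hH]; exact ⟨w, fun _ _ => rfl⟩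
      · rw [hH]; exact ⟨0, by simp⟩
      · rw [sub_zero, tVar_quad φ Qx Qy hQx0 hcenter SigQ hSigQ w]
        exact hQposdot w hw
      · rw [sub_zero, tVar_quad φ Qx Qy hQx0 hcenter SigQ hSigQ w]
        congr 1
        rw [← ePt_quad φ P SigP hSigP w]
        congr 1
        funext x y y'
        simp
  rcases Nat.eq_zero_or_pos d with hd | hd
  · -- degenerate case d = 0
    have hall : ∀ w : Fin d → ℝ, w = 0 := by
      intro w; funext i; exact absurd i.2 (by omega)
    have hempty : {v : ℝ | ∃ w : Fin d → ℝ, w ≠ 0 ∧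
        v = (w ⬝ᵥ SigP.mulVec w) / (w ⬝ᵥ SigQ.mulVec w)} = (∅ : Set ℝ) := by
      ext v
      simp only [Set.mem_setOf_eq, Set.mem_empty_iff_false, iff_false, not_exists]
      rintro w ⟨hw, _⟩
      exact hw (hall w)
    constructor
    · rw [hsets]
    · rw [hempty, Real.sInf_empty]
      have hnil : sortedEigenvalues
          ((posSemidefSqrt hQpd.posSemidef)⁻¹ * SigP * (posSemidefSqrt hQpd.posSemidef)⁻¹) = [] := by
        rw [sortedEigenvalues]
        split_ifs with h
        · apply List.eq_nil_of_length_eq_zero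
          rw [Multiset.length_sort, Multiset.card_map]
          simp [hd]
        · rfl
      rw [hnil]
      rfl
  · -- main case d > 0
    haveI : Nonempty (Fin d) := ⟨⟨0, hd⟩⟩
    set S : Matrix (Fin d) (Fin d) ℝ := posSemidefSqrt hQpd.posSemidef with hSdef
    have hS : S.PosSemidef := by
      rw [hSdef]
      unfold posSemidefSqrt
      rw [star_eq_conjTranspose]
      exact (PosSemidef.diagonal (by intro i; simp [Real.sqrt_nonneg])).mul_mul_conjTranspose_same _
    have hSS : S * S = SigQ := by
      have hA := hQpd.posSemidef
      have hUU : (star hA.1.eigenvectorUnitary : Matrix (Fin d) (Fin d) ℝ) *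
          hA.1.eigenvectorUnitary = 1 := by simp
      have hD : diagonal ((↑) ∘ (√·) ∘ hA.1.eigenvalues) *
          diagonal ((↑) ∘ (√·) ∘ hA.1.eigenvalues)
          = diagonal (RCLike.ofReal ∘ hA.1.eigenvalues : Fin d → ℝ) := by
        rw [diagonal_mul_diagonal]; congr 1; funext i
        simp [Real.mul_self_sqrt (hA.eigenvalues_nonneg i)]
      conv_rhs => rw [hA.1.spectral_theorem]
      rw [Unitary.conjStarAlgAut_apply, hSdef, ← hD]
      unfold posSemidefSqrt
      simp only [mul_assoc]
      rw [← mul_assoc (star hA.1.eigenvectorUnitary : Matrix (Fin d) (Fin d) ℝ), hUU, one_mul]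
    have hSpd : S.PosDef := by
      refine Matrix.PosDef.of_dotProduct_mulVec_pos hS.1 fun x hx => ?_
      rcases (hS.dotProduct_mulVec_nonneg x).lt_or_eq with h | h
      · exact h
      · exfalso
        have h0 : S *ᵥ x = 0 := (hS.dotProduct_mulVec_zero_iff x).mp h.symm
        have hq0 : SigQ *ᵥ x = 0 := by
          rw [← hSS, ← mulVec_mulVec, h0, mulVec_zero]
        have h2 := hQpd.dotProduct_mulVec_pos hx
        rw [hq0, dotProduct_zero] at h2
        exact lt_irrefl 0 h2
    have hdet : IsUnit S.det := hSpd.det_pos.ne'.isUnit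
    have hS1 : S * S⁻¹ = 1 := mul_nonsing_inv S hdet
    have hS2 : S⁻¹ * S = 1 := nonsing_inv_mul S hdet
    have hSt : Sᵀ = S := by
      have h := hS.1
      rwa [IsHermitian, conjTranspose_eq_transpose_of_trivial] at h
    have hSit : (S⁻¹)ᵀ = S⁻¹ := by
      rw [transpose_nonsing_inv, hSt]
    have hPsym : SigPᵀ = SigP := by
      ext a b
      rw [transpose_apply, hSigP, hSigP]
      congr 1
      funext x y y'
      ring
    set M : Matrix (Fin d) (Fin d) ℝ := S⁻¹ * SigP * S⁻¹ with hMdef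
    have hM : M.IsHermitian := by
      rw [IsHermitian, conjTranspose_eq_transpose_of_trivial]
      rw [hMdef, transpose_mul, transpose_mul, hSit, hPsym, mul_assoc]
    have q1 : ∀ w : Fin d → ℝ, w ⬝ᵥ SigQ *ᵥ w = (S *ᵥ w) ⬝ᵥ (S *ᵥ w) := by
      intro w
      rw [← hSS, ← mulVec_mulVec, dot_symm S hSt]
    have q2 : ∀ w : Fin d → ℝ, w ⬝ᵥ SigP *ᵥ w = (S *ᵥ w) ⬝ᵥ M *ᵥ (S *ᵥ w) := by
      intro w
      have hMS : M *ᵥ (S *ᵥ w) = S⁻¹ *ᵥ (SigP *ᵥ w) := by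
        rw [mulVec_mulVec, hMdef, mul_assoc (S⁻¹ * SigP), hS2, mul_one, ← mulVec_mulVec]
      rw [hMS, dot_symm S⁻¹ hSit, mulVec_mulVec, hS2, one_mulVec]
    have hxform : {v : ℝ | ∃ w : Fin d → ℝ, w ≠ 0 ∧
          v = (w ⬝ᵥ SigP.mulVec w) / (w ⬝ᵥ SigQ.mulVec w)}
        = {v : ℝ | ∃ u : Fin d → ℝ, u ≠ 0 ∧ v = (u ⬝ᵥ M *ᵥ u) / (u ⬝ᵥ u)} := by
      ext v
      simp only [Set.mem_setOf_eq]
      constructor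
      · rintro ⟨w, hw, rfl⟩
        refine ⟨S *ᵥ w, ?_, by rw [q1, q2]⟩
        intro h0
        have hq := hQposdot w hw
        rw [q1, h0, dotProduct_zero] at hq
        exact lt_irrefl 0 hq
      · rintro ⟨u, hu, rfl⟩
        have hSu : S *ᵥ (S⁻¹ *ᵥ u) = u := by
          rw [mulVec_mulVec, hS1, one_mulVec]
        refine ⟨S⁻¹ *ᵥ u, ?_, ?_⟩
        · intro h0
          apply hu
          rw [← hSu, h0, mulVec_zero]
        · rw [q1, q2, hSu]
    obtain ⟨i₀, _, hi₀'⟩ := Finset.exists_min_image Finset.univ hM.eigenvalues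
      ⟨Classical.arbitrary (Fin d), Finset.mem_univ _⟩
    have hi₀ : ∀ i, hM.eigenvalues i₀ ≤ hM.eigenvalues i := fun i => hi₀' i (Finset.mem_univ i)
    have hleast := rayleigh_isLeast M hM i₀ hi₀
    constructor
    · rw [hsets]
    · rw [hxform, hleast.csInf_eq, sortedEigenvalues_head hd M hM i₀ hi₀]
end
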